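/- Let k be a positive integer and m a nonnegative integer. Define functions \(W^m: \mathbb{R}_{>0} \to \mathbb{R}\) recursively by \(W^0(a) = a^{k/2}e^{-2\pi a}\) and \(W^{m+1}(a) = 2a\frac{d}{da}W^m(a) + (k+2m-4\pi a)W^m(a)\). Then \(W^m(a) = 2^m e^{-2\pi a}\sum_{j=0}^{m}(-4\pi)^j\binom{m}{j}\frac{\Gamma(k+m)}{\Gamma(k+j)}a^{k/2+j}\). -/

import Mathlib

open Finset


noncomputable def cc (k m j : ℕ) : ℝ :=
  (-4 * Real.pi) ^ j * (m.choose j : ℝ) *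
    (Real.Gamma ((k : ℝ) + m) / Real.Gamma ((k : ℝ) + j))

noncomputable def dd (k m j : ℕ) : ℝ :=
  (-4 * Real.pi) ^ j * (m.choose j : ℝ) * ∏ i ∈ Finset.Ico j m, ((k : ℝ) + i)

lemma binr (m j : ℕ) :
    ((j : ℝ) + 1) * (m.choose (j + 1) : ℝ) = ((m : ℝ) - j) * (m.choose j : ℝ) := by
  rcases lt_or_ge j m with h | h
  · have h2 := Nat.choose_succ_right_eq m j
    have h3 : ((m.choose (j+1)) * (j+1) : ℝ) = (m.choose j : ℝ) * ((m : ℝ) - j) := by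
      rw [show (m : ℝ) - j = ((m - j : ℕ) : ℝ) from by rw [Nat.cast_sub h.le]]
      exact_mod_cast congrArg (Nat.cast : ℕ → ℝ) h2
    linarith
  · rcases eq_or_lt_of_le h with rfl | h'
    · simp [Nat.choose_succ_self]
    · simp [Nat.choose_eq_zero_of_lt h', Nat.choose_eq_zero_of_lt (Nat.lt_succ_of_lt h')]

lemma gamma_ratio (k : ℕ) (hk : 1 ≤ k) (j d : ℕ) :
    Real.Gamma ((k : ℝ) + (j + d : ℕ)) =
      Real.Gamma ((k : ℝ) + j) * ∏ i ∈ Finset.Ico j (j + d), ((k : ℝ) + i) := by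
  have hkpos : (0:ℝ) < (k:ℝ) := by exact_mod_cast hk
  induction d with
  | zero => simp
  | succ d ih =>
    have h1 : (j : ℕ) + (d+1) = (j + d) + 1 := by ring
    rw [h1]
    have h2 : ((k:ℝ) + ((j+d)+1 : ℕ)) = ((k:ℝ) + (j+d : ℕ)) + 1 := by push_cast; ring
    rw [h2, Real.Gamma_add_one (by positivity), ih,
      Finset.prod_Ico_succ_top (by omega : j ≤ j + d)]
    push_cast
    ring

lemma cc_eq_dd (k : ℕ) (hk : 1 ≤ k) (m j : ℕ) : cc k m j = dd k m j := by
  rcases le_or_gt j m with h | h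
  · obtain ⟨d, rfl⟩ := Nat.exists_eq_add_of_le h
    unfold cc dd
    rw [gamma_ratio k hk j d]
    have hG : Real.Gamma ((k:ℝ) + j) ≠ 0 := by
      have : (0:ℝ) < (k:ℝ) + j := by
        have : (0:ℝ) < (k:ℝ) := by exact_mod_cast hk
        positivity
      exact (Real.Gamma_pos_of_pos this).ne'
    field_simp
  · unfold cc dd
    rw [Nat.choose_eq_zero_of_lt h]
    simp

lemma dd_rec (k m j : ℕ) :
    dd k m (j+1) * ((k:ℝ) + m + ((j:ℝ)+1)) - 4 * Real.pi * dd k m j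
      = dd k (m+1) (j+1) := by
  rcases lt_trichotomy j m with h | rfl | h
  · unfold dd
    rw [Finset.prod_eq_prod_Ico_succ_bot h, Finset.prod_Ico_succ_top (by omega : j + 1 ≤ m),
      Nat.choose_succ_succ m j]
    push_cast
    linear_combination ((-4*Real.pi)^(j+1) * ∏ i ∈ Finset.Ico (j+1) m, ((k : ℝ) + i)) * binr m j
  · unfold dd
    simp [Nat.choose_succ_self]
    ring
  · unfold dd
    rw [Nat.choose_eq_zero_of_lt h, Nat.choose_eq_zero_of_lt (Nat.lt_succ_of_lt h),
      Nat.choose_eq_zero_of_lt (by omega : m + 1 < j + 1)]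
    simp

lemma cc_rec (k : ℕ) (hk : 1 ≤ k) (m j : ℕ) :
    cc k m (j+1) * ((k:ℝ) + m + ((j:ℝ)+1)) - 4 * Real.pi * cc k m j
      = cc k (m+1) (j+1) := by
  rw [cc_eq_dd k hk, cc_eq_dd k hk, cc_eq_dd k hk]; exact dd_rec k m j

lemma cc_top (k m : ℕ) : cc k m (m+1) = 0 := by
  unfold cc; simp [Nat.choose_succ_self]

lemma cc_zero (k : ℕ) (hk : 1 ≤ k) (m : ℕ) :
    cc k (m+1) 0 = cc k m 0 * ((k:ℝ) + m) := by
  have hkpos : (0:ℝ) < (k:ℝ) := by exact_mod_cast hk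
  unfold cc
  rw [show ((k:ℝ) + (m+1:ℕ)) = ((k:ℝ) + m) + 1 by push_cast; ring,
    Real.Gamma_add_one (by positivity)]
  simp
  ring

lemma key2 (k : ℕ) (hk : 1 ≤ k) (m : ℕ) (a : ℝ) (ha : 0 < a) :
    (∑ j ∈ range (m+1), cc k m j * (((k:ℝ)/2 + j) * a ^ ((k:ℝ)/2 + j)))
      + ((k:ℝ)/2 + m) * ∑ j ∈ range (m+1), cc k m j * a ^ ((k:ℝ)/2 + j)
      - 4 * Real.pi * a * ∑ j ∈ range (m+1), cc k m j * a ^ ((k:ℝ)/2 + j)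
      = ∑ j ∈ range (m+2), cc k (m+1) j * a ^ ((k:ℝ)/2 + j) := by
  have h1 : (∑ j ∈ range (m+1), cc k m j * (((k:ℝ)/2 + j) * a ^ ((k:ℝ)/2 + j)))
      + ((k:ℝ)/2 + m) * ∑ j ∈ range (m+1), cc k m j * a ^ ((k:ℝ)/2 + j)
      = ∑ j ∈ range (m+1), cc k m j * (((k:ℝ) + m + j) * a ^ ((k:ℝ)/2 + j)) := by
    rw [Finset.mul_sum, ← Finset.sum_add_distrib]
    exact Finset.sum_congr rfl fun j _ => by ring
  have hext : ∑ j ∈ range (m+1), cc k m j * (((k:ℝ) + m + j) * a ^ ((k:ℝ)/2 + j))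
      = ∑ j ∈ range (m+2), cc k m j * (((k:ℝ) + m + j) * a ^ ((k:ℝ)/2 + j)) := by
    rw [Finset.sum_range_succ (fun j => cc k m j * (((k:ℝ) + m + j) * a ^ ((k:ℝ)/2 + j))) (m+1), cc_top]
    ring
  have h2 : ∑ j ∈ range (m+2), cc k m j * (((k:ℝ) + m + j) * a ^ ((k:ℝ)/2 + j))
      = (∑ j ∈ range (m+1), cc k m (j+1) * (((k:ℝ) + m + ((j:ℕ)+1:ℕ)) * a ^ ((k:ℝ)/2 + ((j:ℕ)+1:ℕ))))
        + cc k m 0 * (((k:ℝ) + m + (0:ℕ)) * a ^ ((k:ℝ)/2 + (0:ℕ))) :=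
    Finset.sum_range_succ' _ (m+1)
  have h3 : ∑ j ∈ range (m+2), cc k (m+1) j * a ^ ((k:ℝ)/2 + j)
      = (∑ j ∈ range (m+1), cc k (m+1) (j+1) * a ^ ((k:ℝ)/2 + ((j:ℕ)+1:ℕ)))
        + cc k (m+1) 0 * a ^ ((k:ℝ)/2 + (0:ℕ)) :=
    Finset.sum_range_succ' _ (m+1)
  have h4 : 4 * Real.pi * a * ∑ j ∈ range (m+1), cc k m j * a ^ ((k:ℝ)/2 + j)
      = ∑ j ∈ range (m+1), 4 * Real.pi * cc k m j * a ^ ((k:ℝ)/2 + ((j:ℕ)+1:ℕ)) := by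
    rw [Finset.mul_sum]
    refine Finset.sum_congr rfl fun j _ => ?_
    rw [show ((k:ℝ)/2 + ((j:ℕ)+1:ℕ)) = ((k:ℝ)/2 + j) + 1 by push_cast; ring,
      Real.rpow_add_one ha.ne']
    ring
  have h5 : (∑ j ∈ range (m+1), cc k m (j+1) * (((k:ℝ) + m + ((j:ℕ)+1:ℕ)) * a ^ ((k:ℝ)/2 + ((j:ℕ)+1:ℕ))))
      - ∑ j ∈ range (m+1), 4 * Real.pi * cc k m j * a ^ ((k:ℝ)/2 + ((j:ℕ)+1:ℕ))
      = ∑ j ∈ range (m+1), cc k (m+1) (j+1) * a ^ ((k:ℝ)/2 + ((j:ℕ)+1:ℕ)) := by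
    rw [← Finset.sum_sub_distrib]
    refine Finset.sum_congr rfl fun j _ => ?_
    have := cc_rec k hk m j
    push_cast
    linear_combination (a ^ ((k:ℝ)/2 + ((j:ℝ)+1))) * this
  have h6 : cc k m 0 * (((k:ℝ) + m + (0:ℕ)) * a ^ ((k:ℝ)/2 + (0:ℕ)))
      = cc k (m+1) 0 * a ^ ((k:ℝ)/2 + (0:ℕ)) := by
    rw [cc_zero k hk m]
    push_cast
    ring
  linear_combination h1 + hext + h2 + h5 + h6 - h4 - h3

lemma hasDeriv_F (k m : ℕ) (a : ℝ) (ha : 0 < a) :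
    HasDerivAt (fun x : ℝ => 2 ^ m * (Real.exp (-2 * Real.pi * x) *
        ∑ j ∈ range (m+1), cc k m j * x ^ ((k:ℝ)/2 + j)))
      (2 ^ m * ((Real.exp (-2 * Real.pi * a) * (-2 * Real.pi)) *
          (∑ j ∈ range (m+1), cc k m j * a ^ ((k:ℝ)/2 + j))
        + Real.exp (-2 * Real.pi * a) *
          ∑ j ∈ range (m+1), cc k m j * (((k:ℝ)/2 + j) * a ^ (((k:ℝ)/2 + j) - 1)))) a := by
  have hE : HasDerivAt (fun x : ℝ => Real.exp (-2 * Real.pi * x))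
      (Real.exp (-2 * Real.pi * a) * (-2 * Real.pi)) a := by
    have h1 : HasDerivAt (fun x : ℝ => -2 * Real.pi * x) (-2 * Real.pi) a := by
      simpa using (hasDerivAt_id a).const_mul (-2 * Real.pi)
    exact h1.exp
  have hS : HasDerivAt (fun x : ℝ => ∑ j ∈ range (m+1), cc k m j * x ^ ((k:ℝ)/2 + j))
      (∑ j ∈ range (m+1), cc k m j * (((k:ℝ)/2 + j) * a ^ (((k:ℝ)/2 + j) - 1))) a := by
    refine HasDerivAt.fun_sum fun j _ => ?_
    exact (Real.hasDerivAt_rpow_const (Or.inl ha.ne')).const_mul (cc k m j)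
  exact (hE.mul hS).const_mul (2 ^ m)

theorem stmt6' (k : ℕ) (hk : 1 ≤ k) (W : ℕ → ℝ → ℝ)
    (hW0 : ∀ a : ℝ, 0 < a → W 0 a = a ^ ((k : ℝ) / 2) * Real.exp (-2 * Real.pi * a))
    (hWrec : ∀ m : ℕ, ∀ a : ℝ, 0 < a →
      W (m + 1) a = 2 * a * deriv (W m) a + ((k : ℝ) + 2 * m - 4 * Real.pi * a) * W m a) :
    ∀ m : ℕ, ∀ a : ℝ, 0 < a →
      W m a = 2 ^ m * Real.exp (-2 * Real.pi * a) *
        ∑ j ∈ Finset.range (m + 1), cc k m j * a ^ ((k : ℝ) / 2 + j) := by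
  have hGk : Real.Gamma ((k:ℝ)) ≠ 0 := by
    have : (0:ℝ) < (k:ℝ) := by exact_mod_cast hk
    exact (Real.Gamma_pos_of_pos this).ne'
  intro m
  induction m with
  | zero =>
    intro a ha
    rw [hW0 a ha]
    unfold cc
    simp [div_self hGk]
    ring
  | succ m ih =>
    intro a ha
    have hev : W m =ᶠ[nhds a] (fun x : ℝ => 2 ^ m * (Real.exp (-2 * Real.pi * x) *
        ∑ j ∈ range (m+1), cc k m j * x ^ ((k:ℝ)/2 + j))) := by
      filter_upwards [Ioi_mem_nhds ha] with x hx
      rw [ih x hx]; ring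
    have hD := hasDeriv_F k m a ha
    have hderiv : deriv (W m) a = 2 ^ m * ((Real.exp (-2 * Real.pi * a) * (-2 * Real.pi)) *
          (∑ j ∈ range (m+1), cc k m j * a ^ ((k:ℝ)/2 + j))
        + Real.exp (-2 * Real.pi * a) *
          ∑ j ∈ range (m+1), cc k m j * (((k:ℝ)/2 + j) * a ^ (((k:ℝ)/2 + j) - 1))) := by
      rw [hev.deriv_eq]; exact hD.deriv
    have hT : a * ∑ j ∈ range (m+1), cc k m j * (((k:ℝ)/2 + j) * a ^ (((k:ℝ)/2 + j) - 1))
        = ∑ j ∈ range (m+1), cc k m j * (((k:ℝ)/2 + j) * a ^ ((k:ℝ)/2 + j)) := by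
      rw [Finset.mul_sum]
      refine Finset.sum_congr rfl fun j _ => ?_
      rw [Real.rpow_sub_one ha.ne']
      field_simp
    have hkey := key2 k hk m a ha
    rw [hWrec m a ha, ih a ha, hderiv]
    linear_combination (2 * 2 ^ m * Real.exp (-2 * Real.pi * a)) * hkey
      + (2 * 2 ^ m * Real.exp (-2 * Real.pi * a)) * hT


/-- Explicit formula for the repeatedly weight-raised Whittaker function. -/
theorem stmt6 (k : ℕ) (hk : 1 ≤ k) (W : ℕ → ℝ → ℝ)
    (hW0 : ∀ a : ℝ, 0 < a → W 0 a = a ^ ((k : ℝ) / 2) * Real.exp (-2 * Real.pi * a))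
    (hWrec : ∀ m : ℕ, ∀ a : ℝ, 0 < a →
      W (m + 1) a = 2 * a * deriv (W m) a + ((k : ℝ) + 2 * m - 4 * Real.pi * a) * W m a) :
    ∀ m : ℕ, ∀ a : ℝ, 0 < a →
      W m a = 2 ^ m * Real.exp (-2 * Real.pi * a) *
        ∑ j ∈ Finset.range (m + 1),
          (-4 * Real.pi) ^ j * (m.choose j : ℝ) *
            (Real.Gamma ((k : ℝ) + m) / Real.Gamma ((k : ℝ) + j)) *
            a ^ ((k : ℝ) / 2 + j) := by
  simpa only [cc] using stmt6' k hk W hW0 hWrec
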